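/- Let D : V → V → Prop be a directed graph on a finite vertex type V in which every arc lies on an elementary cycle (for every u, v with D u v there exist pairwise distinct vertices i_1 = u, i_2 = v, …, i_k with D i_q i_{q+1} for all q < k and D i_k i_1; loops D u u count as cycles of length 1). Then any two vertices joined by a path in the underlying undirected graph (the reflexive–transitive closure of the symmetrized relation) are strongly connected: each is reachable from the other by a directed path (reflexive–transitive closure of D in each direction). -/

import Mathlib

private lemma chain'_rtg {V : Type*} {D : V → V → Prop} :
    ∀ (l : List V), l.Chain' D → ∀ h : l ≠ [],
      Relation.ReflTransGen D (l.head h) (l.getLast h)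
  | [], _, h => absurd rfl h
  | [a], _, _ => Relation.ReflTransGen.refl
  | a :: b :: t, hc, _ => by
      replace hc := List.isChain_cons_cons.mp hc
      have ih := chain'_rtg (b :: t) hc.2 (by simp)
      simpa using Relation.ReflTransGen.head hc.1 (by simpa using ih)

/-- Let `D` be a digraph on a finite vertex type in which every arc lies on
an elementary cycle: for every arc `D u v` there is a nodup list of vertices, either the
singleton `[u]` when `u = v` (a loop, a cycle of length 1) or of the form `u :: v :: t`,
whose consecutive vertices are joined by arcs and whose last vertex has an arc back to
its head. Then any two vertices joined by a path in the underlying undirected graph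
(reflexive–transitive closure of the symmetrized relation) are strongly connected:
each is reachable from the other by a directed path. -/
theorem arcs_on_cycles_weak_implies_strong (V : Type*) [Fintype V]
    (D : V → V → Prop)
    (hcyc : ∀ u v : V, D u v → ∃ l : List V, l.Nodup ∧ l.Chain' D ∧
      (∃ h : l ≠ [], D (l.getLast h) (l.head h)) ∧
      ((u = v ∧ l = [u]) ∨ ∃ t : List V, l = u :: v :: t)) :
    ∀ u v : V, Relation.ReflTransGen (fun x y => D x y ∨ D y x) u v →
      Relation.ReflTransGen D u v ∧ Relation.ReflTransGen D v u := by
  have back : ∀ u v : V, D u v → Relation.ReflTransGen D v u := by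
    intro u v huv
    obtain ⟨l, _, hch, ⟨hne, hlast⟩, hcase⟩ := hcyc u v huv
    rcases hcase with ⟨rfl, rfl⟩ | ⟨t, rfl⟩
    · exact Relation.ReflTransGen.refl
    · have hch2 : (v :: t).Chain' D := (List.isChain_cons_cons.mp hch).2
      have h1 := chain'_rtg (v :: t) hch2 (by simp)
      have hl : (u :: v :: t).getLast hne = (v :: t).getLast (by simp) := by
        simp [List.getLast_cons]
      have hhd : (u :: v :: t).head hne = u := rfl
      rw [hl, hhd] at hlast
      have h1' : Relation.ReflTransGen D v ((v :: t).getLast (by simp)) := by simpa using h1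
      exact h1'.trans (Relation.ReflTransGen.single hlast)
  intro u v h
  induction h with
  | refl => exact ⟨.refl, .refl⟩
  | tail hab hbc ih =>
    rcases hbc with h1 | h1
    · exact ⟨ih.1.trans (.single h1), (back _ _ h1).trans ih.2⟩
    · exact ⟨ih.1.trans (back _ _ h1), (Relation.ReflTransGen.single h1).trans ih.2⟩
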